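/- arXiv:2307.09486 — 3 statements merged into one kernel-verified Lean document; each statement's English description precedes it below -/
import Mathlib

section
/- Let k ≥ 2 and suppose nonnegative integers n ≥ m ≥ l ≥ 0, d ≥ 2, 1 ≤ a ≤ 9 satisfy L_n^{(k)} · L_m^{(k)} · L_l^{(k)} = a·(10^d − 1)/9. Then (n − 3)/5 < d, and if moreover n ≥ 2 then d < n + 2 (in particular d ≤ 2n). -/
/-- The `k`-generalized Lucas sequence: `L 0 = 2`, `L 1 = 1`, and for `n ≥ 2`,
`L n = L (n-1) + L (n-2) + ⋯ + L (n-k)`, where terms with negative index count as `0`. -/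
def lucasK (k : ℕ) : ℕ → ℕ
  | 0 => 2
  | 1 => 1
  | n + 2 => ∑ j ∈ Finset.range k, if _ : j ≤ n + 1 then lucasK k (n + 1 - j) else 0
termination_by n => n
decreasing_by omega

lemma lucasK_add_two (k n : ℕ) :
    lucasK k (n + 2) =
      ∑ j ∈ Finset.range k, if _ : j ≤ n + 1 then lucasK k (n + 1 - j) else 0 := by
  rw [lucasK]

lemma lucasK_pos (k : ℕ) (hk : 2 ≤ k) : ∀ n, 1 ≤ lucasK k n := by
  intro n
  induction n using Nat.strong_induction_on with
  | _ n ih =>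
    match n with
    | 0 => simp [lucasK]
    | 1 => simp [lucasK]
    | n + 2 =>
      rw [lucasK_add_two]
      calc 1 ≤ lucasK k (n + 1) := ih (n + 1) (by omega)
        _ = (if _ : (0:ℕ) ≤ n + 1 then lucasK k (n + 1 - 0) else 0) := by simp
        _ ≤ _ := Finset.single_le_sum
            (f := fun j => if _ : j ≤ n + 1 then lucasK k (n + 1 - j) else 0)
            (fun i _ => Nat.zero_le _) (Finset.mem_range.mpr (by omega))

lemma lucasK_step (k : ℕ) (hk : 2 ≤ k) (n : ℕ) :
    lucasK k (n + 1) + lucasK k n ≤ lucasK k (n + 2) := by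
  rw [lucasK_add_two]
  have hsub : Finset.range 2 ⊆ Finset.range k := Finset.range_subset_range.mpr hk
  calc lucasK k (n + 1) + lucasK k n
      = ∑ j ∈ Finset.range 2, if _ : j ≤ n + 1 then lucasK k (n + 1 - j) else 0 := by
        rw [Finset.sum_range_succ, Finset.sum_range_succ, Finset.sum_range_zero]
        simp
    _ ≤ _ := Finset.sum_le_sum_of_subset hsub

lemma lucasK_mono (k : ℕ) (hk : 2 ≤ k) {a b : ℕ} (ha : 1 ≤ a) (hab : a ≤ b) :
    lucasK k a ≤ lucasK k b := by
  induction b, hab using Nat.le_induction with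
  | base => exact le_refl _
  | succ b hb ih =>
    obtain ⟨c, rfl⟩ : ∃ c, b = c + 1 := ⟨b - 1, by omega⟩
    have hs : lucasK k (c + 1) + lucasK k c ≤ lucasK k (c + 1 + 1) := lucasK_step k hk c
    exact le_trans ih (by omega)

lemma lucasK_grow (k : ℕ) (hk : 2 ≤ k) (d : ℕ) :
    4 * 10 ^ d ≤ lucasK k (5 * d + 3) ∧ 7 * 10 ^ d ≤ lucasK k (5 * d + 4) := by
  induction d with
  | zero =>
    have h0 : lucasK k 0 = 2 := by simp [lucasK]
    have h1 : lucasK k 1 = 1 := by simp [lucasK]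
    have s0 : lucasK k 1 + lucasK k 0 ≤ lucasK k 2 := lucasK_step k hk 0
    have s1 : lucasK k 2 + lucasK k 1 ≤ lucasK k 3 := lucasK_step k hk 1
    have s2 : lucasK k 3 + lucasK k 2 ≤ lucasK k 4 := lucasK_step k hk 2
    constructor <;> · show _ ≤ lucasK k _
                      simp only [pow_zero, mul_one, Nat.mul_zero, Nat.zero_add]
                      omega
  | succ d ih =>
    obtain ⟨h3, h4⟩ := ih
    have s3 : lucasK k (5 * d + 4) + lucasK k (5 * d + 3) ≤ lucasK k (5 * d + 5) :=
      lucasK_step k hk (5 * d + 3)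
    have s4 : lucasK k (5 * d + 5) + lucasK k (5 * d + 4) ≤ lucasK k (5 * d + 6) :=
      lucasK_step k hk (5 * d + 4)
    have s5 : lucasK k (5 * d + 6) + lucasK k (5 * d + 5) ≤ lucasK k (5 * d + 7) :=
      lucasK_step k hk (5 * d + 5)
    have s6 : lucasK k (5 * d + 7) + lucasK k (5 * d + 6) ≤ lucasK k (5 * d + 8) :=
      lucasK_step k hk (5 * d + 6)
    have s7 : lucasK k (5 * d + 8) + lucasK k (5 * d + 7) ≤ lucasK k (5 * d + 9) :=
      lucasK_step k hk (5 * d + 7)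
    have e1 : 5 * (d + 1) + 3 = 5 * d + 8 := by ring
    have e2 : 5 * (d + 1) + 4 = 5 * d + 9 := by ring
    have ep : (10:ℕ) ^ (d + 1) = 10 * 10 ^ d := by ring
    rw [e1, e2, ep]
    constructor <;> omega

lemma sum_two_pow_le (m : ℕ) : ∑ i ∈ Finset.range m, 2 ^ (i + 1) ≤ 2 ^ (m + 1) := by
  induction m with
  | zero => simp
  | succ m ih =>
    rw [Finset.sum_range_succ]
    have : (2:ℕ) ^ (m + 1 + 1) = 2 ^ (m + 1) + 2 ^ (m + 1) := by ring
    omega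

lemma lucasK_le (k : ℕ) : ∀ n, lucasK k n ≤ 2 ^ (n + 1) := by
  intro n
  induction n using Nat.strong_induction_on with
  | _ n ih =>
    match n with
    | 0 => simp [lucasK]
    | 1 => simp [lucasK]
    | n + 2 =>
      rw [lucasK_add_two]
      set N := max k (n + 2) with hN
      calc (∑ j ∈ Finset.range k, if _ : j ≤ n + 1 then lucasK k (n + 1 - j) else 0)
          ≤ ∑ j ∈ Finset.range N, if _ : j ≤ n + 1 then lucasK k (n + 1 - j) else 0 :=
            Finset.sum_le_sum_of_subset (Finset.range_subset_range.mpr (le_max_left _ _))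
        _ = ∑ j ∈ Finset.range (n + 2), if _ : j ≤ n + 1 then lucasK k (n + 1 - j) else 0 := by
            apply (Finset.sum_subset (Finset.range_subset_range.mpr (le_max_right _ _)) _).symm
            intro x hx hx'
            have : ¬ x ≤ n + 1 := by
              simp only [Finset.mem_range] at hx hx'
              omega
            simp [this]
        _ = ∑ j ∈ Finset.range (n + 2), lucasK k (n + 1 - j) := by
            apply Finset.sum_congr rfl
            intro x hx
            have : x ≤ n + 1 := by simp only [Finset.mem_range] at hx; omega
            simp [this]
        _ ≤ ∑ j ∈ Finset.range (n + 2), 2 ^ (n + 1 - j + 1) := by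
            apply Finset.sum_le_sum
            intro i _
            exact ih (n + 1 - i) (by omega)
        _ = ∑ i ∈ Finset.range (n + 2), 2 ^ (i + 1) := by
            rw [← Finset.sum_range_reflect (fun i => 2 ^ (i + 1)) (n + 2)]
            apply Finset.sum_congr rfl
            intro x hx
            simp only [Finset.mem_range] at hx
            congr 2
        _ ≤ 2 ^ (n + 2 + 1) := sum_two_pow_le (n + 2)

theorem d_bounds_for_repdigit_products
    (k n m l d a : ℕ) (hk : 2 ≤ k) (hnm : m ≤ n) (hml : l ≤ m)
    (hd : 2 ≤ d) (ha1 : 1 ≤ a) (ha9 : a ≤ 9)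
    (heq : lucasK k n * lucasK k m * lucasK k l = a * ((10 ^ d - 1) / 9)) :
    ((n : ℝ) - 3) / 5 < d ∧ (2 ≤ n → d < n + 2 ∧ d ≤ 2 * n) := by
  have hdvd : (9:ℕ) ∣ 10 ^ d - 1 := by
    have := Nat.sub_dvd_pow_sub_pow 10 1 d
    simpa using this
  have hr9 : 9 * ((10 ^ d - 1) / 9) = 10 ^ d - 1 := Nat.mul_div_cancel' hdvd
  have hpow1 : 1 ≤ (10:ℕ) ^ d := Nat.one_le_pow _ _ (by norm_num)
  have hmpos := lucasK_pos k hk m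
  have hlpos := lucasK_pos k hk l
  constructor
  · by_contra hcon
    push_neg at hcon
    have hn : 5 * d + 3 ≤ n := by
      have h5 : (5:ℝ) * d + 3 ≤ (n:ℝ) := by linarith
      exact_mod_cast h5
    have h1 : 4 * 10 ^ d ≤ lucasK k n :=
      le_trans (lucasK_grow k hk d).1 (lucasK_mono k hk (by omega) hn)
    have h2 : lucasK k n ≤ a * ((10 ^ d - 1) / 9) := by
      calc lucasK k n ≤ lucasK k n * (lucasK k m * lucasK k l) :=
            Nat.le_mul_of_pos_right _ (Nat.mul_pos hmpos hlpos)
        _ = lucasK k n * lucasK k m * lucasK k l := by ring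
        _ = _ := heq
    have h3 : a * ((10 ^ d - 1) / 9) ≤ 10 ^ d - 1 := by
      calc a * ((10 ^ d - 1) / 9) ≤ 9 * ((10 ^ d - 1) / 9) :=
            Nat.mul_le_mul_right _ ha9
        _ = 10 ^ d - 1 := hr9
    omega
  · intro hn2
    have hub : a * ((10 ^ d - 1) / 9) ≤ 8 ^ (n + 1) := by
      have bn := lucasK_le k n
      have bm : lucasK k m ≤ 2 ^ (n + 1) :=
        le_trans (lucasK_le k m) (Nat.pow_le_pow_right (by norm_num) (by omega))
      have bl : lucasK k l ≤ 2 ^ (n + 1) :=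
        le_trans (lucasK_le k l) (Nat.pow_le_pow_right (by norm_num) (by omega))
      calc a * ((10 ^ d - 1) / 9) = lucasK k n * lucasK k m * lucasK k l := heq.symm
        _ ≤ 2 ^ (n + 1) * 2 ^ (n + 1) * 2 ^ (n + 1) := by
            exact Nat.mul_le_mul (Nat.mul_le_mul bn bm) bl
        _ = 8 ^ (n + 1) := by rw [← Nat.mul_pow, ← Nat.mul_pow]
    have hlb : 10 ^ (d - 1) ≤ a * ((10 ^ d - 1) / 9) := by
      have h10 : (10:ℕ) ^ d = 10 * 10 ^ (d - 1) := by
        rw [← pow_succ']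
        congr 1
        omega
      have hp1 : 1 ≤ (10:ℕ) ^ (d - 1) := Nat.one_le_pow _ _ (by norm_num)
      have h9 : 9 * 10 ^ (d - 1) ≤ 10 ^ d - 1 := by omega
      have hr : 10 ^ (d - 1) ≤ (10 ^ d - 1) / 9 := by
        rw [Nat.le_div_iff_mul_le (by norm_num)]
        omega
      calc 10 ^ (d - 1) ≤ (10 ^ d - 1) / 9 := hr
        _ ≤ a * ((10 ^ d - 1) / 9) := Nat.le_mul_of_pos_left _ ha1
    have hlt : (10:ℕ) ^ (d - 1) < 10 ^ (n + 1) := by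
      calc (10:ℕ) ^ (d - 1) ≤ 8 ^ (n + 1) := le_trans hlb hub
        _ < 10 ^ (n + 1) := Nat.pow_lt_pow_left (by norm_num) (by omega)
    have hdn : d - 1 < n + 1 := (Nat.pow_lt_pow_iff_right (by norm_num)).mp hlt
    omega
end

section
/- Let k ≥ 2. There are no integers n, m, l with k ≥ n ≥ m ≥ l ≥ 0, and no d ≥ 2, 1 ≤ a ≤ 9, such that L_n^{(k)} · L_m^{(k)} · L_l^{(k)} = a·(10^d − 1)/9. In other words, equation L_n^{(k)} L_m^{(k)} L_l^{(k)} = a(10^d − 1)/9 with d ≥ 2 has no solution when n ≤ k. -/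
lemma sum_two_pow (n : ℕ) : ∑ j ∈ Finset.range n, 2 ^ j = 2 ^ n - 1 := by
  induction n with
  | zero => simp
  | succ n ih =>
    rw [Finset.sum_range_succ, ih, pow_succ]
    have : 1 ≤ 2 ^ n := Nat.one_le_two_pow
    omega

lemma lucasK_formula (k : ℕ) : ∀ i, 2 ≤ i → i ≤ k → lucasK k i = 3 * 2 ^ (i - 2) := by
  intro i
  induction i using Nat.strong_induction_on with
  | _ i ih =>
    intro h2 hik
    obtain ⟨n, rfl⟩ : ∃ n, i = n + 2 := ⟨i - 2, by omega⟩
    rw [lucasK]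
    have hstep : ∑ j ∈ Finset.range k, (if _ : j ≤ n + 1 then lucasK k (n + 1 - j) else 0)
        = ∑ j ∈ Finset.range (n + 2), lucasK k (n + 1 - j) := by
      simp only [dite_eq_ite]
      rw [← Finset.sum_filter]
      congr 1
      ext j
      simp only [Finset.mem_filter, Finset.mem_range]
      omega
    rw [hstep]
    have hrefl : ∑ j ∈ Finset.range (n + 2), lucasK k (n + 1 - j)
        = ∑ j ∈ Finset.range (n + 2), lucasK k j := by
      have := Finset.sum_range_reflect (fun j => lucasK k j) (n + 2)
      simpa using this
    rw [hrefl, Finset.sum_range_succ', Finset.sum_range_succ']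
    have hterm : ∀ j ∈ Finset.range n, lucasK k (j + 1 + 1) = 3 * 2 ^ j := by
      intro j hj
      simp only [Finset.mem_range] at hj
      have := ih (j + 2) (by omega) (by omega) (by omega)
      simpa using this
    rw [Finset.sum_congr rfl hterm]
    have : ∑ j ∈ Finset.range n, 3 * 2 ^ j = 3 * (2 ^ n - 1) := by
      rw [← Finset.mul_sum, sum_two_pow]
    rw [this]
    show 3 * (2 ^ n - 1) + lucasK k 1 + lucasK k 0 = 3 * 2 ^ (n + 2 - 2)
    rw [lucasK, lucasK]
    have : 1 ≤ 2 ^ n := Nat.one_le_two_pow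
    simp only [Nat.add_sub_cancel]
    omega

lemma lucasK_shape (k i : ℕ) (hik : i ≤ k) :
    ∃ x y, lucasK k i = 2 ^ x * 3 ^ y ∧ y ≤ 1 := by
  match i with
  | 0 => exact ⟨1, 0, by rw [lucasK]; norm_num, by omega⟩
  | 1 => exact ⟨0, 0, by rw [lucasK]; norm_num, by omega⟩
  | n + 2 =>
    refine ⟨n, 1, ?_, le_refl _⟩
    rw [lucasK_formula k (n + 2) (by omega) hik]
    simp only [Nat.add_sub_cancel]
    ring

theorem no_solution_when_n_le_k
    (k n m l d a : ℕ) (hk : 2 ≤ k) (hnk : n ≤ k) (hnm : m ≤ n) (hml : l ≤ m)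
    (hd : 2 ≤ d) (ha1 : 1 ≤ a) (ha9 : a ≤ 9)
    (heq : lucasK k n * lucasK k m * lucasK k l = a * ((10 ^ d - 1) / 9)) :
    False := by
  obtain ⟨xn, yn, hn, hyn⟩ := lucasK_shape k n hnk
  obtain ⟨xm, ym, hm, hym⟩ := lucasK_shape k m (le_trans hnm hnk)
  obtain ⟨xl, yl, hl, hyl⟩ := lucasK_shape k l (le_trans (le_trans hml hnm) hnk)
  set R := (10 ^ d - 1) / 9 with hRdef
  have h9 : 9 ∣ 10 ^ d - 1 := by
    have := Nat.sub_dvd_pow_sub_pow 10 1 d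
    simpa using this
  have hR9 : 9 * R = 10 ^ d - 1 := Nat.mul_div_cancel' h9
  have h10d : 10 ^ 2 ≤ 10 ^ d := Nat.pow_le_pow_right (by norm_num) hd
  have hRodd : Odd R := by
    have hodd : Odd (10 ^ d - 1) := by
      have h2d : 2 ∣ 10 ^ d := dvd_pow (by norm_num) (by omega)
      rcases h2d with ⟨c, hc⟩
      refine ⟨c - 1, by omega⟩
    rw [← hR9] at hodd
    exact (Nat.odd_mul.mp hodd).2
  have heq2 : 2 ^ (xn + xm + xl) * 3 ^ (yn + ym + yl) = a * R := by
    rw [← heq, hn, hm, hl]; ring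
  set A := xn + xm + xl
  set B := yn + ym + yl with hBdef
  have hB : B ≤ 3 := by omega
  -- 2^A divides a
  have hdvd : 2 ^ A ∣ a * R := ⟨3 ^ B, heq2.symm⟩
  have hcop : Nat.Coprime (2 ^ A) R :=
    Nat.Coprime.pow_left _ (Nat.coprime_two_left.mpr hRodd)
  have hdvda : 2 ^ A ∣ a := (Nat.Coprime.dvd_of_dvd_mul_right hcop hdvd)
  have hAle : A ≤ 3 := by
    by_contra hA
    have : 2 ^ 4 ≤ 2 ^ A := Nat.pow_le_pow_right (by norm_num) (by omega)
    have := Nat.le_of_dvd (by omega) hdvda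
    omega
  have hRle : R ≤ 216 := by
    have h1 : a * R = 2 ^ A * 3 ^ B := heq2.symm
    have h2 : 2 ^ A ≤ 8 := by
      calc 2 ^ A ≤ 2 ^ 3 := Nat.pow_le_pow_right (by norm_num) hAle
        _ = 8 := by norm_num
    have h3 : 3 ^ B ≤ 27 := by
      calc 3 ^ B ≤ 3 ^ 3 := Nat.pow_le_pow_right (by norm_num) hB
        _ = 27 := by norm_num
    have : a * R ≤ 216 := by
      rw [h1]
      calc 2 ^ A * 3 ^ B ≤ 8 * 27 := Nat.mul_le_mul h2 h3
        _ = 216 := by norm_num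
    nlinarith
  have hdle : d ≤ 3 := by
    by_contra hd4
    have : 10 ^ 4 ≤ 10 ^ d := Nat.pow_le_pow_right (by norm_num) (by omega)
    omega
  interval_cases d
  · -- d = 2 : R = 11
    have : R = 11 := by omega
    rw [this] at heq2
    interval_cases A <;> interval_cases B <;> omega
  · -- d = 3 : R = 111
    have : R = 111 := by omega
    rw [this] at heq2
    interval_cases A <;> interval_cases B <;> omega
end

section
/- Let k ≥ 2, let α be the unique real root of x^k − x^{k−1} − ⋯ − x − 1 in (2(1 − 2^{−k}), 2), and let f_k(x) = (x − 1)/(2 + (k+1)(x − 2)). Then for all integers d ≥ 4, s ≥ 0 and 1 ≤ a ≤ 9 one has (a/9)·10^d ≠ f_k(α)^3 · (2α − 1)^3 · α^s. (Equivalently, the linear form Λ_1 = α^{−(n+m+l−3)}·10^d·f_k(α)^{−3}(2α−1)^{−3}·(a/9) − 1 is nonzero whenever d ≥ 4 and n + m + l ≥ 3.) -/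
open Polynomial


open Polynomial

noncomputable def Complex.abs : AbsoluteValue ℂ ℝ :=
  IsAbsoluteValue.toAbsoluteValue (norm : ℂ → ℝ)

theorem Complex.abs_apply' (z : ℂ) : Complex.abs z = ‖z‖ := rfl

@[simp] theorem Complex.abs_ofNat (n : ℕ) [n.AtLeastTwo] :
    Complex.abs (no_index (OfNat.ofNat n : ℂ)) = OfNat.ofNat n := by
  rw [Complex.abs_apply']; exact Complex.norm_ofNat n

@[simp] theorem Complex.abs_natCast (n : ℕ) : Complex.abs (n : ℂ) = n := by
  rw [Complex.abs_apply']; exact Complex.norm_natCast n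

@[simp] theorem Complex.abs_ofReal (x : ℝ) : Complex.abs (x : ℂ) = |x| := by
  rw [Complex.abs_apply']; exact Complex.norm_real x

private lemma rootBound {k : ℕ} {z : ℂ}
    (hz : z ^ k = ∑ i ∈ Finset.range k, z ^ i) :
    Complex.abs (z - 1) * Complex.abs (2 * z - 1) ≤ 10 := by
  have key : z ^ k * (z - 2) = -1 := by
    linear_combination (z - 1) * hz + geom_sum_mul z k
  have n1 : (0:ℝ) ≤ Complex.abs (z - 1) := Complex.abs.nonneg _
  have n2 : (0:ℝ) ≤ Complex.abs (2 * z - 1) := Complex.abs.nonneg _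
  rcases le_or_gt (Complex.abs z) 1 with h1 | h1
  · have e1 : Complex.abs (z - 1) ≤ 2 := by
      have : Complex.abs (z - 1) ≤ Complex.abs z + Complex.abs 1 := by
        simpa [sub_eq_add_neg] using Complex.abs.add_le z (-1)
      simp at this; linarith
    have e2 : Complex.abs (2 * z - 1) ≤ 3 := by
      have h0 : Complex.abs (2 * z - 1) ≤ Complex.abs (2 * z) + Complex.abs 1 := by
        simpa [sub_eq_add_neg] using Complex.abs.add_le (2 * z) (-1)
      have h2 : Complex.abs (2 * z) = 2 * Complex.abs z := by
        rw [map_mul]; simp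
      rw [h2] at h0; simp at h0; linarith
    nlinarith
  · have habs : Complex.abs z ^ k * Complex.abs (z - 2) = 1 := by
      have := congrArg Complex.abs key
      rwa [map_mul, map_pow, Complex.abs.map_neg, Complex.abs.map_one] at this
    have hp : (1:ℝ) ≤ Complex.abs z ^ k := by
      have := pow_le_pow_left₀ zero_le_one h1.le k; simpa using this
    have h2 : Complex.abs (z - 2) ≤ 1 := by nlinarith [Complex.abs.nonneg (z - 2)]
    have e1 : Complex.abs (z - 1) ≤ 2 := by
      have h3 : z - 1 = (z - 2) + 1 := by ring
      rw [h3]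
      have := Complex.abs.add_le (z - 2) 1
      simp at this; linarith
    have e2 : Complex.abs (2 * z - 1) ≤ 5 := by
      have h3 : 2 * z - 1 = 2 * (z - 2) + 3 := by ring
      rw [h3]
      have h5 := Complex.abs.add_le (2 * (z - 2)) 3
      have h4 : Complex.abs (2 * (z - 2)) = 2 * Complex.abs (z - 2) := by
        rw [map_mul]; simp
      have h6 : Complex.abs (3:ℂ) = 3 := by norm_num [Complex.abs_ofNat]
      rw [h4, h6] at h5; linarith
    nlinarith

private lemma prodBound {f : ℂ → ℝ} {B : ℝ} (hB : 0 ≤ B) (s : Multiset ℂ)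
    (h : ∀ z ∈ s, 0 ≤ f z ∧ f z ≤ B) :
    0 ≤ (s.map f).prod ∧ (s.map f).prod ≤ B ^ Multiset.card s := by
  induction s using Multiset.induction_on with
  | empty => simp
  | cons a t ih =>
    simp only [Multiset.map_cons, Multiset.prod_cons, Multiset.card_cons]
    obtain ⟨h0, hb⟩ := h a (Multiset.mem_cons_self a t)
    obtain ⟨ih0, ihb⟩ := ih (fun z hz => h z (Multiset.mem_cons_of_mem hz))
    refine ⟨mul_nonneg h0 ih0, ?_⟩
    calc f a * (t.map f).prod ≤ B * B ^ Multiset.card t := mul_le_mul hb ihb ih0 hB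
      _ = B ^ (Multiset.card t + 1) := by ring

private lemma prodSplit {M : Type*} [CommMonoid M] (R : Multiset ℂ) (c : M) (f g : ℂ → M) (n e : ℕ) :
    (R.map fun z => c * f z ^ n * g z ^ e).prod
      = c ^ Multiset.card R * (R.map f).prod ^ n * (R.map g).prod ^ e := by
  rw [Multiset.prod_map_mul, Multiset.prod_map_mul, Multiset.prod_map_pow, Multiset.prod_map_pow]
  congr 2
  rw [show (R.map fun _ => c) = R.map (Function.const ℂ c) from rfl, Multiset.map_const,
    Multiset.prod_replicate]

private lemma prodSplit2 {M : Type*} [CommMonoid M] (R : Multiset ℂ) (c : M) (f : ℂ → M) (n : ℕ) :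
    (R.map fun z => c * f z ^ n).prod = c ^ Multiset.card R * (R.map f).prod ^ n := by
  rw [Multiset.prod_map_mul, Multiset.prod_map_pow]
  congr 1
  rw [show (R.map fun _ => c) = R.map (Function.const ℂ c) from rfl, Multiset.map_const,
    Multiset.prod_replicate]

private lemma prodSplitLin {M : Type*} [CommMonoid M] (R : Multiset ℂ) (c : M) (f : ℂ → M) :
    (R.map fun z => c * f z).prod = c ^ Multiset.card R * (R.map f).prod := by
  rw [Multiset.prod_map_mul]
  congr 1
  rw [show (R.map fun _ => c) = R.map (Function.const ℂ c) from rfl, Multiset.map_const,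
    Multiset.prod_replicate]


set_option maxHeartbeats 1000000 in
theorem Lambda1_nonzero
    (k : ℕ) (hk : 2 ≤ k)
    (α : ℝ) (hroot : α ^ k = ∑ i ∈ Finset.range k, α ^ i)
    (hα₁ : 2 * (1 - (2 : ℝ) ^ (-(k : ℤ))) < α) (hα₂ : α < 2) :
    ∀ d s a : ℕ, 4 ≤ d → 1 ≤ a → a ≤ 9 →
      ((a : ℝ) / 9) * 10 ^ d ≠
        ((α - 1) / (2 + ((k : ℝ) + 1) * (α - 2))) ^ 3 * (2 * α - 1) ^ 3 * α ^ s := by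
  intro d s a hd ha1 ha9 heq
  have hk0 : (0:ℝ) < (k:ℝ) := by
    have : (0:ℕ) < k := by omega
    exact_mod_cast this
  have hk1 : (0:ℝ) < (k:ℝ) + 1 := by linarith
  -- c = 2k/(k+1) < α
  have hcα : (2 * (k:ℝ)) / ((k:ℝ) + 1) < α := by
    have hpow : (0:ℝ) < 2 ^ k := by positivity
    have h2k : ((k:ℝ) + 1) ≤ 2 ^ k := by
      have := Nat.lt_two_pow_self (n := k)
      have : (k + 1 : ℕ) ≤ 2 ^ k := this
      exact_mod_cast this
    have e : 2 * (1 - (2:ℝ) ^ (-(k:ℤ))) = 2 - 2 / 2 ^ k := by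
      rw [zpow_neg, zpow_natCast]; ring
    have hle : (2 * (k:ℝ)) / ((k:ℝ) + 1) ≤ 2 - 2 / 2 ^ k := by
      rw [div_le_iff₀ hk1]
      have h1 : 2 * ((k:ℝ) + 1) / 2 ^ k ≤ 2 := by
        rw [div_le_iff₀ hpow]; nlinarith
      have h2 : (2 - 2 / 2 ^ k) * ((k:ℝ) + 1) = 2 * ((k:ℝ) + 1) - 2 * ((k:ℝ)+1) / 2 ^ k := by
        ring
      rw [h2]; linarith
    linarith [e ▸ hα₁]
  have hD : 0 < ((k:ℝ) + 1) * α - 2 * (k:ℝ) := by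
    rw [div_lt_iff₀ hk1] at hcα; linarith
  -- the polynomial Ψ
  set Ψ : ℤ[X] := X ^ k - ∑ i ∈ Finset.range k, X ^ i with hΨdef
  have hΨmonic : Ψ.Monic := by
    apply monic_X_pow_sub
    apply lt_of_le_of_lt (degree_sum_le _ _)
    rw [Finset.sup_lt_iff (by exact_mod_cast WithBot.bot_lt_coe k)]
    intro i hi
    rw [degree_X_pow]
    exact_mod_cast Finset.mem_range.mp hi
  have hΨeval : (aeval α) Ψ = 0 := by
    simp only [hΨdef, map_sub, map_pow, map_sum, aeval_X]
    rw [sub_eq_zero]; exact hroot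
  have hint : IsIntegral ℤ α := ⟨Ψ, hΨmonic, hΨeval⟩
  set μ : ℤ[X] := minpoly ℤ α with hμdef
  have hμmonic : μ.Monic := minpoly.monic hint
  set m := μ.natDegree with hmdef
  have hm1 : 1 ≤ m := minpoly.natDegree_pos hint
  have hdvdΨ : μ ∣ Ψ := minpoly.isIntegrallyClosed_dvd hint hΨeval
  -- the polynomial P from the assumed equality
  set A : ℤ := (a:ℤ) * 10 ^ d with hAdef
  set P : ℤ[X] := C 9 * (X - 1) ^ 3 * (2 * X - 1) ^ 3 * X ^ s
      - C A * (C ((k:ℤ) + 1) * X - C (2 * (k:ℤ))) ^ 3 with hPdef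
  have hDne : 2 + ((k:ℝ) + 1) * (α - 2) ≠ 0 := by
    have : 2 + ((k:ℝ) + 1) * (α - 2) = ((k:ℝ) + 1) * α - 2 * (k:ℝ) := by ring
    rw [this]; linarith
  have hkey : (a:ℝ) * 10 ^ d * (((k:ℝ) + 1) * α - 2 * (k:ℝ)) ^ 3
      = 9 * (α - 1) ^ 3 * (2 * α - 1) ^ 3 * α ^ s := by
    field_simp at heq
    linear_combination heq
  have hPeval : (aeval α) P = 0 := by
    simp only [hPdef, map_sub, map_mul, map_pow, aeval_X, aeval_C, map_one, map_ofNat,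
      algebraMap_int_eq, eq_intCast, map_intCast, map_natCast, map_add, hAdef]
    push_cast
    linear_combination -hkey
  have hdvdP : μ ∣ P := minpoly.isIntegrallyClosed_dvd hint hPeval
  -- move to ℂ
  set ic : ℤ →+* ℂ := Int.castRingHom ℂ with hicdef
  set μℂ : ℂ[X] := μ.map ic with hμℂdef
  have hμℂmonic : μℂ.Monic := hμmonic.map ic
  have hμℂne : μℂ ≠ 0 := hμℂmonic.ne_zero
  set R : Multiset ℂ := μℂ.roots with hRdef
  have hsplits : μℂ = (R.map fun z => X - C z).prod :=
    (IsAlgClosed.splits μℂ).eq_prod_roots_of_monic hμℂmonic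
  have hcard : Multiset.card R = m := by
    rw [hRdef, splits_iff_card_roots.mp (IsAlgClosed.splits μℂ)]
    exact hμmonic.natDegree_map ic
  have heval : ∀ x : ℂ, μℂ.eval x = (R.map fun z => x - z).prod := by
    intro x
    conv_lhs => rw [hsplits]
    rw [eval_multiset_prod, Multiset.map_map]
    simp
  have hμℂeval : ∀ q : ℤ[X], μ ∣ q → ∀ z ∈ R, (q.map ic).eval z = 0 := by
    intro q hq z hz
    have hz0 : μℂ.eval z = 0 := (mem_roots hμℂne).mp hz
    exact eval_eq_zero_of_dvd_of_eval_eq_zero (Polynomial.map_dvd ic hq) hz0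
  -- each root satisfies the Ψ equation
  have hΨz : ∀ z ∈ R, z ^ k = ∑ i ∈ Finset.range k, z ^ i := by
    intro z hz
    have := hμℂeval Ψ hdvdΨ z hz
    simp only [hΨdef, Polynomial.map_sub, Polynomial.map_pow, map_X, Polynomial.map_sum,
      eval_sub, eval_pow, eval_X, eval_finset_sum] at this
    rw [sub_eq_zero] at this
    exact this
  -- each root satisfies the P equation, in abs form
  have hPz : ∀ z ∈ R,
      9 * (Complex.abs (z - 1) * Complex.abs (2 * z - 1)) ^ 3 * Complex.abs z ^ s
        = ((a : ℝ) * 10 ^ d) * Complex.abs (((k:ℂ) + 1) * z - 2 * (k:ℂ)) ^ 3 := by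
    intro z hz
    have h0 := hμℂeval P hdvdP z hz
    simp only [hPdef, hAdef, hicdef, Polynomial.map_sub, Polynomial.map_mul, Polynomial.map_pow,
      Polynomial.map_ofNat, map_X, map_C, Polynomial.map_one, eval_sub, eval_mul, eval_pow,
      eval_X, eval_C, eval_ofNat, eval_one, Int.coe_castRingHom] at h0
    rw [sub_eq_zero] at h0
    have h1 : (9 : ℂ) * ((z - 1) * (2 * z - 1)) ^ 3 * z ^ s
        = ((a : ℂ) * 10 ^ d) * (((k:ℂ) + 1) * z - 2 * (k:ℂ)) ^ 3 := by
      push_cast at h0 ⊢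
      linear_combination h0
    have h2 := congrArg Complex.abs h1
    rw [map_mul, map_mul, map_mul, map_pow, map_pow, map_pow, map_mul] at h2
    have e9 : Complex.abs (9 : ℂ) = 9 := by norm_num [Complex.abs_ofNat]
    have eA : Complex.abs ((a : ℂ) * 10 ^ d) = (a : ℝ) * 10 ^ d := by
      rw [map_mul, map_pow]
      norm_num [Complex.abs_natCast, Complex.abs_ofNat]
    rw [e9, eA] at h2
    exact h2
  -- rational minimal polynomial
  set cq : ℚ := 2 * (k:ℚ) / ((k:ℚ) + 1) with hcqdef
  have hk1Q : ((k:ℚ) + 1) ≠ 0 := by positivity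
  set μℚ : ℚ[X] := μ.map (Int.castRingHom ℚ) with hμℚdef
  have hμℚdeg : μℚ.natDegree = m := hμmonic.natDegree_map _
  have hminQ : minpoly ℚ α = μℚ := by
    have h0 := minpoly.isIntegrallyClosed_eq_field_fractions ℚ ℝ (S := ℝ) hint
    simpa [algebraMap_int_eq] using h0
  have hcqR : ((cq : ℝ)) = 2 * (k:ℝ) / ((k:ℝ) + 1) := by
    rw [hcqdef]; push_cast; ring
  have hevalcq : μℚ.eval cq ≠ 0 := by
    intro h0
    have hdvd : X - C cq ∣ μℚ := dvd_iff_isRoot.mpr h0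
    have hintQ : IsIntegral ℚ α := hint.tower_top
    have hirr : Irreducible μℚ := hminQ ▸ minpoly.irreducible hintQ
    have hassoc := (irreducible_X_sub_C cq).associated_of_dvd hirr hdvd
    have heq2 : X - C cq = μℚ := eq_of_monic_of_associated (monic_X_sub_C cq)
      (hμmonic.map _) hassoc
    have h3 : (aeval α) (minpoly ℚ α) = 0 := minpoly.aeval ℚ α
    rw [hminQ, ← heq2] at h3
    simp only [map_sub, aeval_X, aeval_C] at h3
    rw [sub_eq_zero] at h3
    have h4 : algebraMap ℚ ℝ cq = (cq : ℝ) := eq_ratCast _ cq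
    rw [h4, hcqR] at h3
    rw [h3] at hcα
    exact lt_irrefl _ hcα
  -- the integer N
  set N : ℤ := ∑ j ∈ Finset.range (m+1), μ.coeff j * (2*(k:ℤ))^j * ((k:ℤ)+1)^(m-j) with hNdef
  have hNQ : (N : ℚ) = ((k:ℚ)+1)^m * μℚ.eval cq := by
    rw [eval_eq_sum_range, hμℚdeg, hNdef]
    push_cast
    rw [Finset.mul_sum]
    apply Finset.sum_congr rfl
    intro j hj
    have hj' : j ≤ m := by have := Finset.mem_range.mp hj; omega
    have hsp : ((k:ℚ)+1)^m = ((k:ℚ)+1)^(m-j) * ((k:ℚ)+1)^j := by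
      rw [← pow_add]; congr 1; omega
    have hco : μℚ.coeff j = ((μ.coeff j : ℤ) : ℚ) := by rw [hμℚdef, coeff_map]; simp
    rw [hco, hcqdef, hsp, div_pow]
    field_simp
  have hNne : N ≠ 0 := by
    intro h0
    rw [h0] at hNQ
    have hpne : ((k:ℚ)+1)^m ≠ 0 := pow_ne_zero _ hk1Q
    have h1 : ((k:ℚ)+1)^m * μℚ.eval cq = 0 := by exact_mod_cast hNQ.symm
    rcases mul_eq_zero.mp h1 with h | h
    · exact hpne h
    · exact hevalcq h
  -- identity for the denominator factor
  have hk1C : ((k:ℂ) + 1) ≠ 0 := by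
    have h0 : ((k:ℂ) + 1) = ((k+1 : ℕ) : ℂ) := by push_cast; ring
    rw [h0]
    exact Nat.cast_ne_zero.mpr (Nat.succ_ne_zero k)
  have hc : ∀ z : ℂ, ((k:ℂ)+1) * z - 2*(k:ℂ) = (-((k:ℂ)+1)) * ((cq:ℂ) - z) := by
    intro z
    have hcqC : ((cq:ℚ):ℂ) = 2 * (k:ℂ) / ((k:ℂ) + 1) := by
      rw [hcqdef]; push_cast; ring
    rw [hcqC]
    field_simp
    ring
  -- evaluation transfers
  have hmapQ : μℂ = μℚ.map (algebraMap ℚ ℂ) := by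
    have hcomp : (algebraMap ℚ ℂ).comp (Int.castRingHom ℚ) = ic := Subsingleton.elim _ _
    rw [hμℚdef, hμℂdef, Polynomial.map_map, hcomp]
  have hfc : algebraMap ℚ ℂ cq = ((cq:ℚ):ℂ) := eq_ratCast _ cq
  have hμℂcq : μℂ.eval ((cq:ℚ):ℂ) = ((μℚ.eval cq : ℚ) : ℂ) := by
    rw [hmapQ, ← hfc, eval_map, eval₂_at_apply]
    exact eq_ratCast _ _
  have hμℂ0 : μℂ.eval 0 = ((μ.eval 0 : ℤ) : ℂ) := by
    rw [hμℂdef, show (0:ℂ) = ic 0 by simp [hicdef], eval_map, eval₂_at_apply]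
    simp [hicdef]
  -- μ.eval 0 = ±1
  have hμ0 : μ.eval 0 = 1 ∨ μ.eval 0 = -1 := by
    obtain ⟨t, ht⟩ := hdvdΨ
    have hΨ0 : Ψ.coeff 0 = -1 := by
      rw [hΨdef, coeff_sub, coeff_X_pow, finset_sum_coeff]
      have hkne : ¬ (0 = k) := by omega
      simp only [if_neg hkne, coeff_X_pow]
      rw [Finset.sum_eq_single 0]
      · simp
      · intro b _ hb; simp [Ne.symm hb]
      · intro h; exact absurd (Finset.mem_range.mpr (by omega : 0 < k)) h
    have hmul : μ.coeff 0 * t.coeff 0 = -1 := by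
      rw [← mul_coeff_zero, ← ht, hΨ0]
    have hu : IsUnit (μ.coeff 0) := IsUnit.of_mul_eq_one (-(t.coeff 0)) (by linarith [hmul])
    rw [coeff_zero_eq_eval_zero] at hu
    exact Int.isUnit_iff.mp hu
  -- the three products
  set u : ℂ → ℝ := fun z => Complex.abs (z - 1) * Complex.abs (2 * z - 1) with hudef
  set v : ℂ → ℝ := fun z => Complex.abs (((k:ℂ)+1) * z - 2*(k:ℂ)) with hvdef
  set w : ℂ → ℝ := fun z => Complex.abs z with hwdef
  set U : ℝ := (R.map u).prod with hUdef
  set V : ℝ := (R.map v).prod with hVdef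
  set W : ℝ := (R.map w).prod with hWdef
  have hprodeq : 9 ^ m * U ^ 3 * W ^ s = ((a:ℝ) * 10 ^ d) ^ m * V ^ 3 := by
    have h1 : (R.map fun z => 9 * (u z) ^ 3 * (w z) ^ s).prod
        = (R.map fun z => ((a:ℝ) * 10 ^ d) * (v z) ^ 3).prod :=
      congrArg Multiset.prod (Multiset.map_congr rfl (fun z hz => hPz z hz))
    rw [prodSplit, prodSplit2, hcard] at h1
    exact h1
  have hW1 : W = 1 := by
    have habs0 : Complex.abs (μℂ.eval 0) = W := by
      rw [heval 0, map_multiset_prod, Multiset.map_map, hWdef]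
      apply congrArg Multiset.prod
      apply Multiset.map_congr rfl
      intro z hz
      simp [Function.comp, hwdef]
    rw [hμℂ0] at habs0
    rcases hμ0 with h | h <;> rw [h] at habs0 <;> simpa using habs0.symm
  have hUb : 0 ≤ U ∧ U ≤ 10 ^ m := by
    rw [hUdef, ← hcard]
    apply prodBound (by norm_num)
    intro z hz
    exact ⟨mul_nonneg (Complex.abs.nonneg _) (Complex.abs.nonneg _), rootBound (hΨz z hz)⟩
  have hV1 : 1 ≤ V := by
    have h2 : V = Complex.abs ((R.map fun z => ((k:ℂ)+1) * z - 2*(k:ℂ)).prod) := by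
      rw [map_multiset_prod, Multiset.map_map, hVdef]
      rfl
    have h3 : (R.map fun z => ((k:ℂ)+1) * z - 2*(k:ℂ)).prod
        = (-((k:ℂ)+1)) ^ Multiset.card R * (R.map fun z => ((cq:ℚ):ℂ) - z).prod := by
      rw [Multiset.map_congr rfl (fun z _ => hc z), prodSplitLin]
    have e1 : Complex.abs (-((k:ℂ)+1)) = (k:ℝ)+1 := by
      rw [AbsoluteValue.map_neg]
      have h0 : ((k:ℂ)+1) = ((k+1:ℕ):ℂ) := by push_cast; ring
      rw [h0, Complex.abs_natCast]; push_cast; ring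
    have e2 : Complex.abs (((μℚ.eval cq : ℚ)) : ℂ) = |((μℚ.eval cq : ℚ) : ℝ)| := by
      rw [show (((μℚ.eval cq : ℚ)) : ℂ) = ((((μℚ.eval cq : ℚ) : ℝ)) : ℂ) by push_cast; rfl,
        Complex.abs_ofReal]
    have h4 : V = ((k:ℝ)+1)^m * |((μℚ.eval cq : ℚ) : ℝ)| := by
      rw [h2, h3, ← heval, map_mul, map_pow, hcard, hμℂcq, e1, e2]
    have hNR : ((N:ℝ)) = ((k:ℝ)+1)^m * ((μℚ.eval cq : ℚ) : ℝ) := by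
      exact_mod_cast congrArg (fun q : ℚ => (q : ℝ)) hNQ
    have h1N : (1:ℝ) ≤ |(N:ℝ)| := by
      have := Int.one_le_abs hNne
      calc (1:ℝ) = ((1:ℤ):ℝ) := by norm_num
        _ ≤ ((|N|:ℤ):ℝ) := by exact_mod_cast this
        _ = |(N:ℝ)| := by push_cast; ring
    have hposk : (0:ℝ) < ((k:ℝ)+1)^m := pow_pos hk1 m
    calc (1:ℝ) ≤ |(N:ℝ)| := h1N
      _ = |((k:ℝ)+1)^m * ((μℚ.eval cq : ℚ) : ℝ)| := by rw [hNR]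
      _ = ((k:ℝ)+1)^m * |((μℚ.eval cq : ℚ) : ℝ)| := by
          rw [abs_mul, abs_of_pos hposk]
      _ = V := h4.symm
  -- final contradiction
  obtain ⟨hU0, hU10⟩ := hUb
  have hA4 : (10:ℝ)^4 ≤ (a:ℝ) * 10 ^ d := by
    have h1 : (10:ℝ)^4 ≤ 10^d := pow_le_pow_right₀ (by norm_num) hd
    have h2 : (1:ℝ) ≤ (a:ℝ) := by exact_mod_cast ha1
    have h3 : (0:ℝ) ≤ (10:ℝ)^d := by positivity
    calc (10:ℝ)^4 ≤ 10^d := h1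
      _ = 1 * 10^d := (one_mul _).symm
      _ ≤ (a:ℝ) * 10^d := mul_le_mul_of_nonneg_right h2 h3
  have hL : 9 ^ m * U ^ 3 * W ^ s ≤ 9000 ^ m := by
    rw [hW1, one_pow, mul_one]
    calc 9 ^ m * U ^ 3 ≤ 9 ^ m * (10 ^ m) ^ 3 := by
          have h5 := pow_le_pow_left₀ hU0 hU10 3
          have h9 : (0:ℝ) ≤ 9 ^ m := by positivity
          exact mul_le_mul_of_nonneg_left h5 h9
      _ = 9 ^ m * ((10:ℝ) ^ 3) ^ m := by rw [pow_right_comm]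
      _ = 9000 ^ m := by rw [← mul_pow]; norm_num
  have hR : (10000:ℝ) ^ m ≤ ((a:ℝ) * 10 ^ d) ^ m * V ^ 3 := by
    have h1 : (10000:ℝ) ^ m ≤ ((a:ℝ)*10^d) ^ m := by
      apply pow_le_pow_left₀ (by norm_num)
      calc (10000:ℝ) = 10^4 := by norm_num
        _ ≤ (a:ℝ)*10^d := hA4
    have h2 : (1:ℝ) ≤ V ^ 3 := one_le_pow₀ hV1
    have h3 : (0:ℝ) ≤ ((a:ℝ)*10^d) ^ m := by positivity
    calc (10000:ℝ) ^ m ≤ ((a:ℝ)*10^d) ^ m := h1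
      _ = ((a:ℝ)*10^d) ^ m * 1 := (mul_one _).symm
      _ ≤ ((a:ℝ)*10^d) ^ m * V ^ 3 := mul_le_mul_of_nonneg_left h2 h3
  have hlt : (9000:ℝ) ^ m < 10000 ^ m :=
    pow_lt_pow_left₀ (by norm_num) (by norm_num) (by omega)
  rw [← hprodeq] at hR
  linarith
end
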